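/- Let a ≥ |μ|/2 and let e : (a,∞) → M₂(ℂ) be continuous and bounded such that e(x) = (I − ½Q₀(x))^{−1}·e⁰(x)·(I + ∫_x^∞ D(t) dt) for all x > a, where D(t) = ½·e⁰(t)^{−1}·(Q₀′(t) + Q₀(t)·B·Q₀(t))·e(t) and the integral converges absolutely. Then e is differentiable on (a,∞) and satisfies B·e′(x) + Q₀(x)·e(x) = e(x) for all x > a. -/

import Mathlib

open Complex Matrix Set MeasureTheory

attribute [local instance] Matrix.linftyOpNormedRing Matrix.linftyOpNormedAlgebra

noncomputable def Bmat : Matrix (Fin 2) (Fin 2) ℂ := !![0, 1; -1, 0]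
noncomputable def Jmat : Matrix (Fin 2) (Fin 2) ℂ := !![0, 1; 1, 0]

/-- `Q₀(x) = (μ/x) J`. -/
noncomputable def Q0 (μ : ℂ) (x : ℝ) : Matrix (Fin 2) (Fin 2) ℂ := (μ / (x : ℂ)) • Jmat

/-- `e⁰(x) = [[i e^{ix}, -i e^{-ix}],[e^{ix}, e^{-ix}]]`. -/
noncomputable def e0 (x : ℝ) : Matrix (Fin 2) (Fin 2) ℂ :=
  !![Complex.I * Complex.exp (Complex.I * x), -Complex.I * Complex.exp (-(Complex.I * x));
     Complex.exp (Complex.I * x), Complex.exp (-(Complex.I * x))]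

/-- `D(t) = ½ e⁰(t)⁻¹ (Q₀'(t) + Q₀(t) B Q₀(t)) e(t)`, with `Q₀'(t) = -(μ/t²) J`. -/
noncomputable def Dker (μ : ℂ) (e : ℝ → Matrix (Fin 2) (Fin 2) ℂ) (t : ℝ) :
    Matrix (Fin 2) (Fin 2) ℂ :=
  (1 / 2 : ℂ) • ((e0 t)⁻¹ * ((-(μ / (t : ℂ) ^ 2)) • Jmat + Q0 μ t * Bmat * Q0 μ t) * e t)

lemma e0_mul_right (x : ℝ) : e0 x *
    ((2 * Complex.I)⁻¹ • !![Complex.exp (-(Complex.I * x)), Complex.I * Complex.exp (-(Complex.I * x));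
      -Complex.exp (Complex.I * x), Complex.I * Complex.exp (Complex.I * x)]) = 1 := by
  ext i j
  fin_cases i <;> fin_cases j <;>
    simp [e0, Matrix.mul_apply, Fin.sum_univ_two, Matrix.one_apply, Matrix.smul_apply,
      Complex.exp_neg] <;>
    field_simp [Complex.exp_ne_zero, Complex.I_ne_zero] <;>
    first
      | ring1
      | linear_combination (-4*Complex.exp (Complex.I*x)^2) * Complex.I_sq
      | linear_combination (2*Complex.I*Complex.exp (Complex.I*x)^2) * Complex.I_sq
      | linear_combination (-2*Complex.exp (Complex.I*x)^2) * Complex.I_sq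
      | linear_combination (2*Complex.exp (Complex.I*x)^2 - 2) * Complex.I_sq
      | linear_combination (-2 : ℂ) * Complex.I_sq

lemma e0_inv (x : ℝ) : (e0 x)⁻¹ =
    (2 * Complex.I)⁻¹ • !![Complex.exp (-(Complex.I * x)), Complex.I * Complex.exp (-(Complex.I * x));
      -Complex.exp (Complex.I * x), Complex.I * Complex.exp (Complex.I * x)] :=
  Matrix.inv_eq_right_inv (e0_mul_right x)

lemma e0_mul_inv (x : ℝ) : e0 x * (e0 x)⁻¹ = 1 := by
  rw [e0_inv]; exact e0_mul_right x

lemma P_inv (μ : ℂ) (x : ℝ) (hx : (x:ℂ) ≠ 0) (hd : 4*(x:ℂ)^2 - μ^2 ≠ 0) :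
    (1 - (1 / 2 : ℂ) • Q0 μ x)⁻¹ =
    ((4*(x:ℂ)^2) / (4*(x:ℂ)^2 - μ^2)) • (1 + (μ / (2*(x:ℂ))) • Jmat) := by
  apply Matrix.inv_eq_right_inv
  have hN : (x:ℂ)^2*μ^4*4 - (x:ℂ)^4*μ^2*32 + (x:ℂ)^6*64 ≠ 0 := by
    have h : (x:ℂ)^2*μ^4*4 - (x:ℂ)^4*μ^2*32 + (x:ℂ)^6*64 = 4*(x:ℂ)^2*(4*(x:ℂ)^2-μ^2)^2 := by ring
    rw [h]
    exact mul_ne_zero (mul_ne_zero (by norm_num) (pow_ne_zero _ hx)) (pow_ne_zero _ hd)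
  ext i j
  fin_cases i <;> fin_cases j <;>
    simp [Q0, Jmat, Matrix.mul_apply, Fin.sum_univ_two, Matrix.one_apply, Matrix.smul_apply,
      Matrix.sub_apply, Matrix.add_apply] <;>
    field_simp [hx, hd, hN] <;>
    first
      | ring1
      | linear_combination inv_mul_cancel₀ hN
      | (rw [div_eq_iff (by contrapose! hd; linear_combination hd)]; ring1)

lemma cont_e0inv : Continuous (fun t : ℝ => (e0 t)⁻¹) := by
  simp only [e0_inv]
  apply Continuous.fun_const_smul
  apply continuous_matrix
  intro i j
  fin_cases i <;> fin_cases j <;> simp <;> fun_prop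

lemma cont_Dker (μ : ℂ) (a : ℝ) (ha : 0 < a) (e : ℝ → Matrix (Fin 2) (Fin 2) ℂ)
    (hcont : ContinuousOn e (Set.Ioi a)) :
    ContinuousOn (fun t => Dker μ e t) (Set.Ioi a) := by
  have hne : ∀ t ∈ Set.Ioi a, (t : ℂ) ≠ 0 := by
    intro t ht
    exact_mod_cast ne_of_gt (lt_trans ha ht)
  unfold Dker
  apply ContinuousOn.fun_smul continuousOn_const
  apply ContinuousOn.fun_mul _ hcont
  apply ContinuousOn.fun_mul cont_e0inv.continuousOn
  apply ContinuousOn.fun_add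
  · apply ContinuousOn.fun_smul _ continuousOn_const
    apply ContinuousOn.fun_neg
    apply ContinuousOn.div continuousOn_const (by fun_prop)
    intro t ht
    exact pow_ne_zero _ (hne t ht)
  · have hQ : ContinuousOn (fun t : ℝ => Q0 μ t) (Set.Ioi a) := by
      unfold Q0
      apply ContinuousOn.fun_smul _ continuousOn_const
      exact ContinuousOn.div continuousOn_const (by fun_prop) hne
    exact (hQ.fun_mul continuousOn_const).fun_mul hQ

lemma G_hasDerivAt {E : Type*} [NormedAddCommGroup E] [NormedSpace ℝ E] [CompleteSpace E] (f : ℝ → E) (a : ℝ)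
    (hcontf : ContinuousOn f (Set.Ioi a))
    (hint : ∀ x ∈ Set.Ioi a, IntegrableOn f (Set.Ioi x))
    (x₀ : ℝ) (hx₀ : x₀ ∈ Set.Ioi a) :
    HasDerivAt (fun x => ∫ t in Set.Ioi x, f t) (-(f x₀)) x₀ := by
  set c := (a + x₀) / 2 with hc
  have hac : a < c := by simp only [hc]; linarith [hx₀.out]
  have hcx : c < x₀ := by simp only [hc]; linarith [hx₀.out]
  have hkey : ∀ x ∈ Set.Ioi c, (∫ t in Set.Ioi x, f t)
      = (∫ t in Set.Ioi c, f t) - ∫ t in c..x, f t := by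
    intro x hx
    have hxa : x ∈ Set.Ioi a := lt_trans hac hx.out
    rw [intervalIntegral.integral_of_le (le_of_lt hx.out)]
    have hunion : Set.Ioc c x ∪ Set.Ioi x = Set.Ioi c := Set.Ioc_union_Ioi_eq_Ioi (le_of_lt hx.out)
    have hdisj : Disjoint (Set.Ioc c x) (Set.Ioi x) := Set.Ioc_disjoint_Ioi le_rfl
    have h1 : IntegrableOn f (Set.Ioc c x) := (hint c hac).mono_set Set.Ioc_subset_Ioi_self
    have h2 : IntegrableOn f (Set.Ioi x) := hint x hxa
    have h3 := MeasureTheory.setIntegral_union hdisj measurableSet_Ioi h1 h2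
    rw [hunion] at h3
    rw [h3]; abel
  have hii : IntervalIntegrable f MeasureTheory.volume c x₀ := by
    rw [intervalIntegrable_iff_integrableOn_Ioc_of_le (le_of_lt hcx)]
    exact (hint c hac).mono_set Set.Ioc_subset_Ioi_self
  have hsm : StronglyMeasurableAtFilter f (nhds x₀) MeasureTheory.volume :=
    hcontf.stronglyMeasurableAtFilter isOpen_Ioi x₀ hx₀
  have hca : ContinuousAt f x₀ := hcontf.continuousAt (Ioi_mem_nhds hx₀.out)
  have hD := intervalIntegral.integral_hasDerivAt_right hii hsm hca
  have h2 : HasDerivAt (fun x => (∫ t in Set.Ioi c, f t) - ∫ t in c..x, f t) (-(f x₀)) x₀ :=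
    hD.const_sub _
  exact h2.congr_of_eventuallyEq <| Filter.eventuallyEq_of_mem (Ioi_mem_nhds hcx) hkey

lemma hasDerivAt_coe (x : ℝ) : HasDerivAt (fun t : ℝ => (t : ℂ)) 1 x := by
  simpa using (hasDerivAt_id x).ofReal_comp

lemma hasDerivAt_expI (x : ℝ) :
    HasDerivAt (fun t : ℝ => Complex.exp (Complex.I * t)) (Complex.I * Complex.exp (Complex.I * x)) x := by
  have h := ((hasDerivAt_coe x).const_mul Complex.I).cexp
  simpa [mul_comm] using h

lemma hasDerivAt_expNegI (x : ℝ) :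
    HasDerivAt (fun t : ℝ => Complex.exp (-(Complex.I * t))) (-Complex.I * Complex.exp (-(Complex.I * x))) x := by
  have h := (((hasDerivAt_coe x).const_mul Complex.I).fun_neg).cexp
  simpa [mul_comm] using h

lemma hasDerivAt_e0 (x : ℝ) : HasDerivAt e0 (-(Bmat * e0 x)) x := by
  have hA := (hasDerivAt_expI x).smul_const (!![Complex.I, 0; (1:ℂ), 0])
  have hC := (hasDerivAt_expNegI x).smul_const (!![0, -Complex.I; 0, (1:ℂ)])
  have h := hA.fun_add hC
  have heq : (fun t : ℝ => Complex.exp (Complex.I * t) • !![Complex.I, 0; (1:ℂ), 0]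
      + Complex.exp (-(Complex.I * t)) • !![0, -Complex.I; 0, (1:ℂ)]) = e0 := by
    funext t
    ext i j
    fin_cases i <;> fin_cases j <;> simp [e0] <;> ring
  rw [heq] at h
  refine h.congr_deriv ?_
  ext i j
  fin_cases i <;> fin_cases j <;>
    simp [e0, Bmat, Matrix.mul_apply, Fin.sum_univ_two] <;> ring_nf <;>
    simp [Complex.I_sq]

lemma cancel_aux (x : ℝ) (A Y : Matrix (Fin 2) (Fin 2) ℂ) (sc c : ℂ) :
    (sc • (A * e0 x)) * (c • ((e0 x)⁻¹ * Y)) = (sc * c) • (A * Y) := by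
  rw [smul_mul_assoc, mul_smul_comm, smul_smul, mul_assoc, ← mul_assoc (e0 x), e0_mul_inv, one_mul]

lemma JmatJmat : Jmat * Jmat = 1 := by
  ext i j
  fin_cases i <;> fin_cases j <;> simp [Jmat, Matrix.mul_apply, Fin.sum_univ_two, Matrix.one_apply]

lemma BmatBmat : Bmat * Bmat = -1 := by
  ext i j
  fin_cases i <;> fin_cases j <;>
    simp [Bmat, Matrix.mul_apply, Fin.sum_univ_two, Matrix.one_apply]

lemma JmatBmat : Jmat * Bmat = -(Bmat * Jmat) := by
  ext i j
  fin_cases i <;> fin_cases j <;> simp [Bmat, Jmat, Matrix.mul_apply, Fin.sum_univ_two]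

lemma JJ_word (X : Matrix (Fin 2) (Fin 2) ℂ) : Jmat * (Jmat * X) = X := by
  rw [← mul_assoc, JmatJmat, one_mul]

lemma BB_word (X : Matrix (Fin 2) (Fin 2) ℂ) : Bmat * (Bmat * X) = -X := by
  rw [← mul_assoc, BmatBmat, neg_one_mul]

lemma JB_word (X : Matrix (Fin 2) (Fin 2) ℂ) : Jmat * (Bmat * X) = -(Bmat * (Jmat * X)) := by
  rw [← mul_assoc, JmatBmat, neg_mul, mul_assoc]

lemma cancel_aux' (x : ℝ) (A Y : Matrix (Fin 2) (Fin 2) ℂ) (sc c : ℂ) :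
    (sc • (A * e0 x)) * -(c • ((e0 x)⁻¹ * Y)) = -((sc * c) • (A * Y)) := by
  rw [mul_neg, cancel_aux]

set_option maxHeartbeats 1600000 in
theorem stmt1 (μ : ℂ) (hμ : 0 < μ.re) (a : ℝ) (ha : a ≥ ‖μ‖ / 2)
    (e : ℝ → Matrix (Fin 2) (Fin 2) ℂ)
    (hcont : ContinuousOn e (Set.Ioi a))
    (hbdd : ∃ M : ℝ, ∀ x ∈ Set.Ioi a, ‖e x‖ ≤ M)
    (hint : ∀ x ∈ Set.Ioi a, @IntegrableOn ℝ (Matrix (Fin 2) (Fin 2) ℂ) _ _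
      NormedAddCommGroup.toENormedAddCommMonoid.toContinuousENorm (fun t => Dker μ e t) (Set.Ioi x) volume)
    (heq : ∀ x ∈ Set.Ioi a,
      e x = (1 - (1 / 2 : ℂ) • Q0 μ x)⁻¹ * e0 x *
        (1 + ∫ t in Set.Ioi x, Dker μ e t)) :
    ∀ x ∈ Set.Ioi a, DifferentiableAt ℝ e x ∧
      Bmat * deriv e x + Q0 μ x * e x = e x := by
  -- basic positivity facts
  have hμ0 : 0 < ‖μ‖ := by
    rw [norm_pos_iff]
    intro h; rw [h] at hμ; simp at hμ
  have ha0 : 0 < a := lt_of_lt_of_le (by positivity) ha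
  have hxC : ∀ x ∈ Set.Ioi a, (x:ℂ) ≠ 0 := by
    intro x hx
    exact_mod_cast ne_of_gt (lt_trans ha0 hx.out)
  have hdC : ∀ x ∈ Set.Ioi a, 4*(x:ℂ)^2 - μ^2 ≠ 0 := by
    intro x hx
    have hax : a < x := hx.out
    intro h
    have h2 : μ^2 = 4*(x:ℂ)^2 := by linear_combination -h
    have h3 : ‖μ‖^2 = 4*x^2 := by
      have h5 := congrArg norm h2
      rw [norm_pow, show ((4:ℂ)*(x:ℂ)^2) = (((4*x^2 : ℝ)):ℂ) by push_cast; ring,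
        Complex.norm_real, Real.norm_eq_abs] at h5
      have h6 : |4*x^2| = 4*x^2 := abs_of_nonneg (by positivity)
      rwa [h6] at h5
    have h4 : ‖μ‖ ≤ 2*a := by linarith [ha]
    nlinarith
  intro x₀ hx₀
  have hax₀ : a < x₀ := hx₀.out
  have hx₀C : (x₀:ℂ) ≠ 0 := hxC x₀ hx₀
  have hd₀ : 4*(x₀:ℂ)^2 - μ^2 ≠ 0 := hdC x₀ hx₀
  set G : ℝ → Matrix (Fin 2) (Fin 2) ℂ := fun x => ∫ t in Set.Ioi x, Dker μ e t with hGdef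
  have hGd : HasDerivAt G (-(Dker μ e x₀)) x₀ :=
    G_hasDerivAt (fun t => Dker μ e t) a (cont_Dker μ a ha0 e hcont) hint x₀ hx₀
  -- scalar derivative
  have hs : HasDerivAt (fun x:ℝ => 4*(x:ℂ)^2/(4*(x:ℂ)^2 - μ^2))
      (-8*(x₀:ℂ)*μ^2/(4*(x₀:ℂ)^2 - μ^2)^2) x₀ := by
    have hnum : HasDerivAt (fun x:ℝ => 4*(x:ℂ)^2) (8*(x₀:ℂ)) x₀ := by
      have h := ((hasDerivAt_coe x₀).fun_mul (hasDerivAt_coe x₀)).const_mul (4:ℂ)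
      have h2 : HasDerivAt (fun x:ℝ => (4:ℂ)*((x:ℂ)*(x:ℂ))) (8*(x₀:ℂ)) x₀ := by
        exact h.congr_deriv (by ring)
      have h3 : (fun x:ℝ => (4:ℂ)*((x:ℂ)*(x:ℂ))) = fun x:ℝ => 4*(x:ℂ)^2 := by
        funext t; ring
      rwa [h3] at h2
    have hden : HasDerivAt (fun x:ℝ => 4*(x:ℂ)^2 - μ^2) (8*(x₀:ℂ)) x₀ := hnum.sub_const _
    have h := hnum.div hden hd₀
    refine h.congr_deriv ?_
    field_simp
    ring
  have hM : HasDerivAt (fun x:ℝ => (1:Matrix (Fin 2) (Fin 2) ℂ) + (μ/(2*(x:ℂ))) • Jmat)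
      ((-(μ/(2*(x₀:ℂ)^2))) • Jmat) x₀ := by
    have hc : HasDerivAt (fun x:ℝ => μ/(2*(x:ℂ))) (-(μ/(2*(x₀:ℂ)^2))) x₀ := by
      have h := (hasDerivAt_const x₀ μ).div ((hasDerivAt_coe x₀).const_mul (2:ℂ))
        (by simpa using hx₀C)
      refine h.congr_deriv ?_
      field_simp
      ring
    exact (hc.smul_const Jmat).const_add 1
  have he0d := hasDerivAt_e0 x₀
  have hsM := hs.fun_smul (hM.fun_mul he0d)
  have hOneG : HasDerivAt (fun x => (1:Matrix (Fin 2) (Fin 2) ℂ) + G x) (-(Dker μ e x₀)) x₀ :=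
    hGd.const_add 1
  have hΦ := hsM.fun_mul hOneG
  have heqev : e =ᶠ[nhds x₀] fun x =>
      (4*(x:ℂ)^2/(4*(x:ℂ)^2 - μ^2)) • ((1 + (μ/(2*(x:ℂ))) • Jmat) * e0 x) * (1 + G x) := by
    filter_upwards [Ioi_mem_nhds hax₀] with x hx
    rw [heq x hx, P_inv μ x (hxC x hx) (hdC x hx), Matrix.smul_mul]
  have hder := hΦ.congr_of_eventuallyEq heqev
  refine ⟨hder.differentiableAt, ?_⟩
  rw [show deriv e x₀ = _ from hder.deriv]
  have hH : e x₀ = (4*(x₀:ℂ)^2/(4*(x₀:ℂ)^2 - μ^2)) • ((1 + (μ/(2*(x₀:ℂ))) • Jmat) * e0 x₀) * (1 + G x₀) := by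
    rw [heq x₀ hx₀, P_inv μ x₀ hx₀C hd₀, Matrix.smul_mul]
  have hDk : Dker μ e x₀ = (1/2:ℂ) • ((e0 x₀)⁻¹ *
      ((-(μ/(x₀:ℂ)^2)) • Jmat + Q0 μ x₀ * Bmat * Q0 μ x₀) *
      ((4*(x₀:ℂ)^2/(4*(x₀:ℂ)^2 - μ^2)) • ((1 + (μ/(2*(x₀:ℂ))) • Jmat) * e0 x₀) * (1 + G x₀))) := by
    unfold Dker; rw [hH]
  rw [hDk, hH]
  generalize (1 + G x₀ : Matrix (Fin 2) (Fin 2) ℂ) = H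
  -- cancel e0 * e0⁻¹ in the Dker term
  rw [show ((e0 x₀)⁻¹ * ((-(μ/(x₀:ℂ)^2)) • Jmat + Q0 μ x₀ * Bmat * Q0 μ x₀) *
      ((4*(x₀:ℂ)^2/(4*(x₀:ℂ)^2 - μ^2)) • ((1 + (μ/(2*(x₀:ℂ))) • Jmat) * e0 x₀) * H)) =
      ((e0 x₀)⁻¹ * (((-(μ/(x₀:ℂ)^2)) • Jmat + Q0 μ x₀ * Bmat * Q0 μ x₀) *
      ((4*(x₀:ℂ)^2/(4*(x₀:ℂ)^2 - μ^2)) • ((1 + (μ/(2*(x₀:ℂ))) • Jmat) * e0 x₀) * H))) from by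
    rw [mul_assoc]]
  rw [cancel_aux']
  -- now a pure rearrangement identity
  generalize e0 x₀ = E
  simp only [Q0, mul_add, add_mul, mul_neg, neg_mul, mul_assoc, smul_mul_assoc, mul_smul_comm,
    smul_smul, smul_add, smul_neg, mul_one, one_mul, neg_neg, JJ_word, BB_word, JB_word]
  have hq : ∀ (k l : ℕ) (c : ℂ) (P : ℂ), c ≠ 0 → P = c * (x₀:ℂ)^k * (4*(x₀:ℂ)^2 - μ^2)^l → P ≠ 0 := by
    intro k l c P hc hP
    rw [hP]
    exact mul_ne_zero (mul_ne_zero hc (pow_ne_zero _ hx₀C)) (pow_ne_zero _ hd₀)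
  have h2a : (x₀:ℂ)^2*μ^4*2 - (x₀:ℂ)^4*μ^2*16 + (x₀:ℂ)^6*32 ≠ 0 :=
    hq 2 2 2 _ (by norm_num) (by ring)
  have h2b : (x₀:ℂ)^3*μ^4*4 - (x₀:ℂ)^5*μ^2*32 + (x₀:ℂ)^7*64 ≠ 0 :=
    hq 3 2 4 _ (by norm_num) (by ring)
  have h2c : (x₀:ℂ)^4*μ^4*8 - (x₀:ℂ)^6*μ^2*64 + (x₀:ℂ)^8*128 ≠ 0 :=
    hq 4 2 8 _ (by norm_num) (by ring)
  have h2d : -((x₀:ℂ)^3*μ^6*4) + ((x₀:ℂ)^5*μ^4*48 - (x₀:ℂ)^7*μ^2*192) + (x₀:ℂ)^9*256 ≠ 0 :=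
    hq 3 3 4 _ (by norm_num) (by ring)
  simp only [div_eq_mul_inv, mul_inv, ← inv_pow]
  generalize hu : ((x₀:ℂ))⁻¹ = u
  generalize hv : (4*(x₀:ℂ)^2 - μ^2)⁻¹ = v
  have hu' : (x₀:ℂ) * u = 1 := by rw [← hu]; exact mul_inv_cancel₀ hx₀C
  have hv' : (4*(x₀:ℂ)^2 - μ^2) * v = 1 := by rw [← hv]; exact mul_inv_cancel₀ hd₀
  match_scalars
  · linear_combination ((-2 : ℂ)*μ*v + (-2 : ℂ)*μ^3*v^2 + (-2 : ℂ)*(x₀:ℂ)*μ*u*v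
        + (2 : ℂ)*(x₀:ℂ)*μ^3*u*v^2 + (8 : ℂ)*(x₀:ℂ)^2*μ*v^2 + (2 : ℂ)*(x₀:ℂ)^2*μ^3*u^2*v^2
        + (8 : ℂ)*(x₀:ℂ)^3*μ*u*v^2 + (2 : ℂ)*(x₀:ℂ)^3*μ^3*u^3*v^2) * hu'
      + ((2 : ℂ)*μ*v) * hv'
  · linear_combination ((2 : ℂ)*μ^2*v + (2 : ℂ)*μ^4*v^2 + (2 : ℂ)*(x₀:ℂ)*μ^2*u*v
        + (2 : ℂ)*(x₀:ℂ)*μ^4*u*v^2 + (-8 : ℂ)*(x₀:ℂ)^2*μ^2*v^2 + (2 : ℂ)*(x₀:ℂ)^2*μ^4*u^2*v^2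
        + (-8 : ℂ)*(x₀:ℂ)^3*μ^2*u*v^2 + (2 : ℂ)*(x₀:ℂ)^3*μ^4*u^3*v^2) * hu'
      + ((-2 : ℂ)*μ^2*v) * hv'
  · ring
  · linear_combination ((8 : ℂ)*(x₀:ℂ)*μ^2*v^2 + (8 : ℂ)*(x₀:ℂ)^2*μ^2*u*v^2
        + (8 : ℂ)*(x₀:ℂ)^3*μ^2*u^2*v^2) * hu'
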